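/- Let G be a group and let g, x ∈ G be such that the commutator [x,g] commutes with both g and x. Let k, l, m, n, p, q, r, s be integers with k·n − l·m = 1 and p·s − q·r = 1, and set A = g^k·x^l and B = g^m·x^n. Then there exists z ∈ G with z⁻¹·(A^p·B^q)·z = g^{p·k + q·m}·x^{p·l + q·n} and z⁻¹·(A^r·B^s)·z = g^{r·k + s·m}·x^{r·l + s·n}. (This is the compatibility of the SL(2,ℤ)-action (g|x) ↦ (g^a x^b | g^c x^d) on diconjugacy classes with matrix multiplication.) -/

import Mathlib

section Aux
variable {G : Type*} [Group G] {g x c : G}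

/-- conjugation of `g` by `x^b` -/
lemma aux_conj1 (hcx : Commute c x) (hxg : x * g = g * x * c) :
    ∀ b : ℤ, x ^ b * g * x ^ (-b) = g * c ^ b := by
  have hgx' : x⁻¹ * g * x = g * c⁻¹ := by
    rw [eq_mul_inv_iff_mul_eq, show x⁻¹ * g * x * c = x⁻¹ * (g * x * c) by group, ← hxg]
    group
  have hgx : x * g * x⁻¹ = g * c := by
    rw [hxg, show g * x * c * x⁻¹ = g * x * (c * x⁻¹) by group, hcx.inv_right.eq]
    group
  have step : ∀ t : ℤ, x ^ t * g * x ^ (-t) = g * c ^ t →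
      x ^ (t + 1) * g * x ^ (-(t + 1)) = g * c ^ (t + 1) := by
    intro t ih
    have h0 : x ^ (t+1) * g * x ^ (-(t+1)) = x * (x ^ t * g * x ^ (-t)) * x⁻¹ := by group
    rw [h0, ih]
    calc x * (g * c ^ t) * x⁻¹ = x * g * (c ^ t * x⁻¹) := by group
      _ = x * g * (x⁻¹ * c ^ t) := by rw [(hcx.zpow_left t).inv_right.eq]
      _ = (x * g * x⁻¹) * c ^ t := by group
      _ = g * c ^ (t+1) := by rw [hgx]; group
  have stepdown : ∀ t : ℤ, x ^ t * g * x ^ (-t) = g * c ^ t →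
      x ^ (t - 1) * g * x ^ (-(t - 1)) = g * c ^ (t - 1) := by
    intro t ih
    have h0 : x ^ (t-1) * g * x ^ (-(t-1)) = x⁻¹ * (x ^ t * g * x ^ (-t)) * x := by group
    rw [h0, ih]
    calc x⁻¹ * (g * c ^ t) * x = x⁻¹ * g * (c ^ t * x) := by group
      _ = x⁻¹ * g * (x * c ^ t) := by rw [(hcx.zpow_left t).eq]
      _ = (x⁻¹ * g * x) * c ^ t := by group
      _ = g * c ^ (t-1) := by rw [hgx']; group
  intro b
  induction b using Int.induction_on with
  | zero => simp
  | succ a ih => exact step _ ih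
  | pred a ih => exact stepdown _ ih

/-- the swap rule -/
lemma aux_swap (hcg : Commute c g) (hcx : Commute c x) (hxg : x * g = g * x * c) :
    ∀ b a : ℤ, x ^ b * g ^ a = g ^ a * x ^ b * c ^ (b * a) := by
  intro b a
  have h1 : x ^ b * g * (x ^ b)⁻¹ = g * c ^ b := by
    rw [← zpow_neg]; exact aux_conj1 hcx hxg b
  have h2 : x ^ b * g ^ a * (x ^ b)⁻¹ = (g * c ^ b) ^ a := by
    rw [← h1, conj_zpow]
  have h3 : (g * c ^ b) ^ a = g ^ a * c ^ (b * a) := by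
    rw [((hcg.zpow_left b).symm).mul_zpow, ← zpow_mul]
  have h4 : c ^ (b * a) * x ^ b = x ^ b * c ^ (b * a) := (hcx.zpow_zpow _ _).eq
  calc x ^ b * g ^ a = (x ^ b * g ^ a * (x ^ b)⁻¹) * x ^ b := by group
    _ = g ^ a * c ^ (b*a) * x ^ b := by rw [h2, h3]
    _ = g ^ a * x ^ b * c ^ (b*a) := by rw [mul_assoc, h4, mul_assoc]

/-- the multiplication law for normal forms -/
lemma aux_mulW (hcg : Commute c g) (hcx : Commute c x) (hxg : x * g = g * x * c)
    (a b e a' b' e' : ℤ) :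
    (g ^ a * x ^ b * c ^ e) * (g ^ a' * x ^ b' * c ^ e') =
      g ^ (a + a') * x ^ (b + b') * c ^ (e + e' + b * a') := by
  have mvG : ∀ (E A : ℤ) (t : G), c ^ E * (g ^ A * t) = g ^ A * (c ^ E * t) := by
    intro E A t; rw [← mul_assoc, (hcg.zpow_zpow E A).eq, mul_assoc]
  have mvX : ∀ (E B : ℤ) (t : G), c ^ E * (x ^ B * t) = x ^ B * (c ^ E * t) := by
    intro E B t; rw [← mul_assoc, (hcx.zpow_zpow E B).eq, mul_assoc]
  have mvS : ∀ (B A : ℤ) (t : G), x ^ B * (g ^ A * t) = g ^ A * (x ^ B * (c ^ (B*A) * t)) := by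
    intro B A t
    rw [← mul_assoc, aux_swap hcg hcx hxg B A, mul_assoc, mul_assoc]
  simp only [mul_assoc]
  rw [mvG e a', mvX e b', mvS b a', mvX (b*a') b',
    zpow_add g, zpow_add x, show e + e' + b*a' = b*a' + (e + e') by ring,
    zpow_add c, zpow_add c]
  simp only [mul_assoc]

lemma aux_invW (hcg : Commute c g) (hcx : Commute c x) (hxg : x * g = g * x * c)
    (a b : ℤ) : (g ^ a * x ^ b)⁻¹ = g ^ (-a) * x ^ (-b) * c ^ (a * b) := by
  apply inv_eq_of_mul_eq_one_right
  have h0 : (g ^ a * x ^ b : G) = g ^ a * x ^ b * c ^ (0:ℤ) := by simp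
  rw [h0, aux_mulW hcg hcx hxg, show a + -a = 0 by ring, show b + -b = 0 by ring,
    show (0:ℤ) + a*b + b*(-a) = 0 by ring]
  simp

lemma aux_powW (hcg : Commute c g) (hcx : Commute c x) (hxg : x * g = g * x * c)
    (a b : ℤ) : ∀ p : ℤ, ∃ e : ℤ, (g ^ a * x ^ b) ^ p = g ^ (p * a) * x ^ (p * b) * c ^ e := by
  have h0 : (g ^ a * x ^ b : G) = g ^ a * x ^ b * c ^ (0:ℤ) := by simp
  have step : ∀ t : ℤ, (∃ e : ℤ, (g ^ a * x ^ b) ^ t = g ^ (t * a) * x ^ (t * b) * c ^ e) →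
      ∃ e : ℤ, (g ^ a * x ^ b) ^ (t+1) = g ^ ((t+1) * a) * x ^ ((t+1) * b) * c ^ e := by
    rintro t ⟨e, he⟩
    refine ⟨e + 0 + t * b * a, ?_⟩
    rw [zpow_add_one, he, h0, aux_mulW hcg hcx hxg,
      show t*a + a = (t+1)*a by ring, show t*b + b = (t+1)*b by ring,
      show t*b*a = (t*b)*a by ring]
  have stepdown : ∀ t : ℤ, (∃ e : ℤ, (g ^ a * x ^ b) ^ t = g ^ (t * a) * x ^ (t * b) * c ^ e) →
      ∃ e : ℤ, (g ^ a * x ^ b) ^ (t-1) = g ^ ((t-1) * a) * x ^ ((t-1) * b) * c ^ e := by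
    rintro t ⟨e, he⟩
    refine ⟨e + a*b + t*b*(-a), ?_⟩
    rw [zpow_sub_one, he, aux_invW hcg hcx hxg, aux_mulW hcg hcx hxg,
      show t*a + -a = (t-1)*a by ring, show t*b + -b = (t-1)*b by ring,
      show t*b*(-a) = (t*b)*(-a) by ring]
  intro p
  induction p using Int.induction_on with
  | zero => exact ⟨0, by simp⟩
  | succ t ih => exact step _ ih
  | pred t ih => exact stepdown _ ih

lemma aux_conjW (hcg : Commute c g) (hcx : Commute c x) (hxg : x * g = g * x * c)
    (α β a b e : ℤ) :
    (g ^ α * x ^ β)⁻¹ * (g ^ a * x ^ b * c ^ e) * (g ^ α * x ^ β) =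
      g ^ a * x ^ b * c ^ (e - β * a + b * α) := by
  rw [aux_invW hcg hcx hxg, aux_mulW hcg hcx hxg,
    show (g ^ α * x ^ β : G) = g ^ α * x ^ β * c ^ (0:ℤ) by simp,
    aux_mulW hcg hcx hxg,
    show -α + a + α = a by ring, show -β + b + β = b by ring,
    show α * β + e + -β * a + 0 + (-β + b) * α = e - β * a + b * α by ring]

end Aux

/-- Compatibility of the `SL(2,ℤ)`-action `(g|x) ↦ (gᵃxᵇ | gᶜxᵈ)` on diconjugacy
classes with matrix multiplication: if `[x,g] = x⁻¹g⁻¹xg` commutes with both `g`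
and `x`, `kn − lm = 1`, `ps − qr = 1`, `A = gᵏxˡ` and `B = gᵐxⁿ`, then the pair
`(AᵖBᵠ, AʳBˢ)` is simultaneously conjugate to
`(g^{pk+qm} x^{pl+qn}, g^{rk+sm} x^{rl+sn})`. -/
theorem SL2Z_action_compatible {G : Type*} [Group G] (g x : G)
    (hg : Commute (x⁻¹ * g⁻¹ * x * g) g) (hx : Commute (x⁻¹ * g⁻¹ * x * g) x)
    (k l m n p q r s : ℤ) (h1 : k * n - l * m = 1) (h2 : p * s - q * r = 1) :
    ∃ z : G,
      z⁻¹ * ((g ^ k * x ^ l) ^ p * (g ^ m * x ^ n) ^ q) * z =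
        g ^ (p * k + q * m) * x ^ (p * l + q * n) ∧
      z⁻¹ * ((g ^ k * x ^ l) ^ r * (g ^ m * x ^ n) ^ s) * z =
        g ^ (r * k + s * m) * x ^ (r * l + s * n) := by
  set c := x⁻¹ * g⁻¹ * x * g with hc
  have hxg : x * g = g * x * c := by rw [hc]; group
  obtain ⟨e, hA⟩ := aux_powW hg hx hxg k l p
  obtain ⟨e', hB⟩ := aux_powW hg hx hxg m n q
  obtain ⟨f, hC⟩ := aux_powW hg hx hxg k l r
  obtain ⟨f', hD⟩ := aux_powW hg hx hxg m n s
  refine ⟨g ^ ((e + e' + p * l * (q * m)) * (r*k + s*m) - (p*k + q*m) * (f + f' + r * l * (s * m))) * x ^ ((r*l + s*n) * (e + e' + p * l * (q * m)) - (p*l + q*n) * (f + f' + r * l * (s * m))), ?_, ?_⟩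
  · rw [hA, hB, aux_mulW hg hx hxg, aux_conjW hg hx hxg,
      show (e + e' + p * l * (q * m)) - ((r*l + s*n) * (e + e' + p * l * (q * m)) - (p*l + q*n) * (f + f' + r * l * (s * m))) * (p * k + q * m) + (p * l + q * n) * ((e + e' + p * l * (q * m)) * (r*k + s*m) - (p*k + q*m) * (f + f' + r * l * (s * m))) = 0 from by
        linear_combination (-(e + e' + p * l * (q * m)) * (p * s - q * r)) * h1 - (e + e' + p * l * (q * m)) * h2]
    simp
  · rw [hC, hD, aux_mulW hg hx hxg, aux_conjW hg hx hxg,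
      show (f + f' + r * l * (s * m)) - ((r*l + s*n) * (e + e' + p * l * (q * m)) - (p*l + q*n) * (f + f' + r * l * (s * m))) * (r * k + s * m) + (r * l + s * n) * ((e + e' + p * l * (q * m)) * (r*k + s*m) - (p*k + q*m) * (f + f' + r * l * (s * m))) = 0 from by
        linear_combination (-(f + f' + r * l * (s * m)) * (p * s - q * r)) * h1 - (f + f' + r * l * (s * m)) * h2]
    simp
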